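/- arXiv:2003.05314 — 6 statements merged into one kernel-verified Lean document; each statement's English description precedes it below -/
import Mathlib

section
/- Let X be a complex Banach space, ν a nonnegative integer, λ ∈ ℂ with |λ| < 1, and h ∈ c_0^ν(X), i.e. ‖h(n)‖/n^ν → 0. Define x_h(n) = ∑_{k=1}^{n-1} λ^{n-1-k} h(k) for n ≥ 1. Then x_h ∈ c_0^ν(X), i.e. lim_{n→∞} ‖x_h(n)‖/n^ν = 0. -/
open Filter Topology

lemma aux_conv_tendsto (r : ℝ) (hr0 : 0 ≤ r) (hr1 : r < 1) (a : ℕ → ℝ)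
    (ha0 : ∀ n, 0 ≤ a n) (ha : Tendsto a atTop (𝓝 0)) :
    Tendsto (fun n : ℕ => ∑ k ∈ Finset.Ico 1 n, r ^ (n - 1 - k) * a k) atTop (𝓝 0) := by
  have hsum : Summable (fun j : ℕ => r ^ j) := summable_geometric_of_lt_one hr0 hr1
  have hgeom : ∀ s : Finset ℕ, ∑ j ∈ s, r ^ j ≤ (1 - r)⁻¹ := by
    intro s
    calc ∑ j ∈ s, r ^ j ≤ ∑' j : ℕ, r ^ j :=
          Summable.sum_le_tsum s (fun j _ => pow_nonneg hr0 j) hsum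
      _ = (1 - r)⁻¹ := tsum_geometric_of_lt_one hr0 hr1
  -- a is bounded above
  obtain ⟨C, hC⟩ : ∃ C, ∀ n, a n ≤ C := by
    obtain ⟨C, hC⟩ := ha.bddAbove_range
    exact ⟨C, fun n => hC ⟨n, rfl⟩⟩
  have hC0 : 0 ≤ C := le_trans (ha0 0) (hC 0)
  have h1r : 0 < 1 - r := by linarith
  rw [Metric.tendsto_atTop] at ha ⊢
  intro ε hε
  obtain ⟨N₀, hN₀⟩ := ha (ε * (1 - r) / 4) (by positivity)
  set N : ℕ := N₀ + 1 with hN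
  have haN : ∀ k ≥ N, a k ≤ ε * (1 - r) / 4 := by
    intro k hk
    have := hN₀ k (by omega)
    rw [Real.dist_eq, sub_zero, abs_of_nonneg (ha0 k)] at this
    linarith
  -- the head term tends to zero
  have hhead : Tendsto (fun n : ℕ => C * N * r ^ (n - N)) atTop (𝓝 0) := by
    have h1 : Tendsto (fun n : ℕ => r ^ n) atTop (𝓝 0) :=
      tendsto_pow_atTop_nhds_zero_of_lt_one hr0 hr1
    have h2 : Tendsto (fun n : ℕ => n - N) atTop atTop := tendsto_sub_atTop_nat N
    have := (h1.comp h2).const_mul (C * N)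
    simpa using this
  rw [Metric.tendsto_atTop] at hhead
  obtain ⟨N₁, hN₁⟩ := hhead (ε / 2) (by positivity)
  refine ⟨max (N + 1) N₁, fun n hn => ?_⟩
  have hnN : N + 1 ≤ n := le_trans (le_max_left _ _) hn
  have hnN₁ : N₁ ≤ n := le_trans (le_max_right _ _) hn
  have hterm_nonneg : ∀ k ∈ Finset.Ico 1 n, 0 ≤ r ^ (n - 1 - k) * a k :=
    fun k _ => mul_nonneg (pow_nonneg hr0 _) (ha0 k)
  rw [Real.dist_eq, sub_zero, abs_of_nonneg (Finset.sum_nonneg hterm_nonneg)]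
  -- split the sum
  have hsplit : ∑ k ∈ Finset.Ico 1 n, r ^ (n - 1 - k) * a k
      = (∑ k ∈ Finset.Ico 1 N, r ^ (n - 1 - k) * a k)
        + ∑ k ∈ Finset.Ico N n, r ^ (n - 1 - k) * a k := by
    rw [Finset.sum_Ico_consecutive _ (by omega) (by omega)]
  rw [hsplit]
  have hhead_bound : ∑ k ∈ Finset.Ico 1 N, r ^ (n - 1 - k) * a k ≤ C * N * r ^ (n - N) := by
    calc ∑ k ∈ Finset.Ico 1 N, r ^ (n - 1 - k) * a k
        ≤ ∑ k ∈ Finset.Ico 1 N, r ^ (n - N) * C := by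
          refine Finset.sum_le_sum fun k hk => ?_
          rw [Finset.mem_Ico] at hk
          exact mul_le_mul (pow_le_pow_of_le_one hr0 hr1.le (by omega))
            (hC k) (ha0 k) (pow_nonneg hr0 _)
      _ = (N - 1 : ℕ) * (r ^ (n - N) * C) := by
          rw [Finset.sum_const, Nat.card_Ico, nsmul_eq_mul]
      _ ≤ (N : ℝ) * (r ^ (n - N) * C) := by
          have h1 : ((N - 1 : ℕ) : ℝ) ≤ (N : ℝ) := by
            exact_mod_cast Nat.sub_le N 1
          exact mul_le_mul_of_nonneg_right h1 (by positivity)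
      _ = C * N * r ^ (n - N) := by ring
  have htail_bound : ∑ k ∈ Finset.Ico N n, r ^ (n - 1 - k) * a k
      ≤ ε * (1 - r) / 4 * (1 - r)⁻¹ := by
    calc ∑ k ∈ Finset.Ico N n, r ^ (n - 1 - k) * a k
        ≤ ∑ k ∈ Finset.Ico N n, r ^ (n - 1 - k) * (ε * (1 - r) / 4) := by
          refine Finset.sum_le_sum fun k hk => ?_
          rw [Finset.mem_Ico] at hk
          exact mul_le_mul_of_nonneg_left (haN k hk.1) (pow_nonneg hr0 _)
      _ = (ε * (1 - r) / 4) * ∑ k ∈ Finset.Ico N n, r ^ (n - 1 - k) := by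
          rw [Finset.mul_sum]; congr 1; ext k; ring
      _ ≤ ε * (1 - r) / 4 * (1 - r)⁻¹ := by
          refine mul_le_mul_of_nonneg_left ?_ (by positivity)
          have hinj : Set.InjOn (fun k => n - 1 - k) (Finset.Ico N n) := by
            intro k1 hk1 k2 hk2 hkk
            simp only [Finset.coe_Ico, Set.mem_Ico] at hk1 hk2
            simp only at hkk
            omega
          rw [← Finset.sum_image (f := fun j => r ^ j) (g := fun k => n - 1 - k)
            (fun x hx y hy => hinj hx hy)]
          exact hgeom _
  have h1 := hN₁ n hnN₁
  rw [Real.dist_eq, sub_zero] at h1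
  have h2 : C * N * r ^ (n - N) < ε / 2 := lt_of_abs_lt h1
  have h3 : ε * (1 - r) / 4 * (1 - r)⁻¹ = ε / 4 := by
    field_simp
  linarith [hhead_bound, htail_bound]

/-- If `|λ| < 1` and `‖h n‖ / n^ν → 0`, then the sequence
`x_h(n) = ∑_{k=1}^{n-1} λ^{n-1-k} h(k)` also satisfies `‖x_h n‖ / n^ν → 0`. -/
theorem stmt_3 (X : Type*) [NormedAddCommGroup X] [NormedSpace ℂ X]
    [CompleteSpace X] (ν : ℕ) (lam : ℂ) (hlam : ‖lam‖ < 1)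
    (h : ℕ → X) (hh : Tendsto (fun n : ℕ => ‖h n‖ / (n : ℝ) ^ ν) atTop (𝓝 0)) :
    Tendsto
      (fun n : ℕ => ‖∑ k ∈ Finset.Ico 1 n, lam ^ (n - 1 - k) • h k‖ / (n : ℝ) ^ ν)
      atTop (𝓝 0) := by
  set r : ℝ := ‖lam‖ with hr
  have hr0 : 0 ≤ r := norm_nonneg lam
  set a : ℕ → ℝ := fun n => ‖h n‖ / (n : ℝ) ^ ν with ha_def
  have ha0 : ∀ n, 0 ≤ a n := fun n => div_nonneg (norm_nonneg _) (by positivity)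
  have key := aux_conv_tendsto r hr0 hlam a ha0 hh
  refine squeeze_zero (fun n => by positivity) (fun n => ?_) key
  rcases Nat.eq_zero_or_pos n with hn | hn
  · subst hn; simp
  have hnpos : (0 : ℝ) < (n : ℝ) ^ ν := by positivity
  calc ‖∑ k ∈ Finset.Ico 1 n, lam ^ (n - 1 - k) • h k‖ / (n : ℝ) ^ ν
      ≤ (∑ k ∈ Finset.Ico 1 n, r ^ (n - 1 - k) * ‖h k‖) / (n : ℝ) ^ ν := by
        gcongr
        refine (norm_sum_le _ _).trans ?_
        refine Finset.sum_le_sum fun k _ => ?_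
        rw [norm_smul, norm_pow]
    _ = ∑ k ∈ Finset.Ico 1 n, r ^ (n - 1 - k) * (‖h k‖ / (n : ℝ) ^ ν) := by
        rw [Finset.sum_div]; congr 1; ext k; ring
    _ ≤ ∑ k ∈ Finset.Ico 1 n, r ^ (n - 1 - k) * a k := by
        refine Finset.sum_le_sum fun k hk => ?_
        rw [Finset.mem_Ico] at hk
        refine mul_le_mul_of_nonneg_left ?_ (pow_nonneg hr0 _)
        have hk0 : (0 : ℝ) < (k : ℝ) ^ ν := by
          have : (1 : ℝ) ≤ (k : ℝ) := by exact_mod_cast hk.1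
          positivity
        exact div_le_div_of_nonneg_left (norm_nonneg _) hk0
          (pow_le_pow_left₀ (by positivity) (by exact_mod_cast hk.2.le) ν)
end

section
/- Let X be a complex Banach space, λ ∈ ℂ with |λ| > 1, ν a nonnegative integer, and f : ℕ → X with ‖f‖_ν = sup_{n≥1} ‖f(n)‖/n^ν < ∞. Then for each n the series x_f(n) = -∑_{k=n}^∞ λ^{n-k-1} f(k) converges absolutely, the sequence x_f satisfies x_f(n+1) = λ x_f(n) + f(n) for all n ≥ 1, and ‖x_f‖_ν ≤ (∑_{j=1}^∞ |λ|^{-j} j^ν) ‖f‖_ν. -/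
/-- For `|λ| > 1` and `f` with `‖f n‖ / n^ν ≤ M` for `n ≥ 1`, the series
`x_f(n) = -∑_{k=n}^∞ λ^{n-k-1} f(k) = -∑_{j=0}^∞ λ^{-(j+1)} f(n+j)` converges
absolutely for each `n`, satisfies `x_f(n+1) = λ x_f(n) + f(n)` for `n ≥ 1`, and
`‖x_f n‖ / n^ν ≤ (∑_{j=1}^∞ |λ|^{-j} j^ν) M` for `n ≥ 1`. -/
theorem stmt_5 (X : Type*) [NormedAddCommGroup X] [NormedSpace ℂ X]
    [CompleteSpace X] (ν : ℕ) (lam : ℂ) (hlam : 1 < ‖lam‖)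
    (f : ℕ → X) (M : ℝ) (hf : ∀ n : ℕ, 1 ≤ n → ‖f n‖ / (n : ℝ) ^ ν ≤ M) :
    (∀ n : ℕ, Summable (fun j : ℕ => ‖(lam⁻¹) ^ (j + 1) • f (n + j)‖)) ∧
    (∀ n : ℕ, 1 ≤ n →
      (-∑' j : ℕ, (lam⁻¹) ^ (j + 1) • f ((n + 1) + j)) =
        lam • (-∑' j : ℕ, (lam⁻¹) ^ (j + 1) • f (n + j)) + f n) ∧
    (∀ n : ℕ, 1 ≤ n →
      ‖-∑' j : ℕ, (lam⁻¹) ^ (j + 1) • f (n + j)‖ / (n : ℝ) ^ ν ≤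
        (∑' j : ℕ, (‖lam‖⁻¹) ^ (j + 1) * ((j : ℝ) + 1) ^ ν) * M) := by
  have hlam0 : lam ≠ 0 := by
    intro h
    simp [h] at hlam
    linarith
  set r : ℝ := ‖lam‖⁻¹ with hr_def
  have hr0 : 0 ≤ r := inv_nonneg.2 (norm_nonneg lam)
  have hr1 : r < 1 := inv_lt_one_of_one_lt₀ hlam
  have hnorm : ∀ (j : ℕ) (x : X), ‖(lam⁻¹) ^ (j + 1) • x‖ = r ^ (j + 1) * ‖x‖ := by
    intro j x
    rw [norm_smul, norm_pow]
    congr 2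
    simp [hr_def, map_inv₀]
  have hM : 0 ≤ M := le_trans (div_nonneg (norm_nonneg _) (by positivity)) (hf 1 le_rfl)
  have hT : Summable (fun j : ℕ => r ^ (j + 1) * ((j : ℝ) + 1) ^ ν) := by
    have h := summable_pow_mul_geometric_of_norm_lt_one (R := ℝ) ν
      (by rwa [Real.norm_eq_abs, abs_of_nonneg hr0])
    have h2 := h.comp_injective Nat.succ_injective
    apply h2.congr
    intro j
    simp only [Function.comp, Nat.succ_eq_add_one]
    push_cast
    ring
  -- part 1
  have hsum : ∀ n : ℕ, Summable (fun j : ℕ => ‖(lam⁻¹) ^ (j + 1) • f (n + j)‖) := by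
    intro n
    set C : ℝ := max ‖f 0‖ (M * ((max n 1 : ℕ) : ℝ) ^ ν) with hCdef
    have hC0 : 0 ≤ C := le_trans (norm_nonneg _) (le_max_left _ _)
    have hbound : ∀ j : ℕ, ‖f (n + j)‖ ≤ C * ((j : ℝ) + 1) ^ ν := by
      intro j
      have h1 : (1 : ℝ) ≤ ((j : ℝ) + 1) ^ ν := one_le_pow₀ (by have := Nat.cast_nonneg (α := ℝ) j; linarith)
      rcases Nat.eq_zero_or_pos (n + j) with h | h
      · rw [h]
        calc ‖f 0‖ ≤ C := le_max_left _ _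
          _ = C * 1 := (mul_one C).symm
          _ ≤ C * ((j : ℝ) + 1) ^ ν := mul_le_mul_of_nonneg_left h1 hC0
      · have hA1 : (1 : ℝ) ≤ ((max n 1 : ℕ) : ℝ) := by exact_mod_cast le_max_right n 1
        have hAn : (n : ℝ) ≤ ((max n 1 : ℕ) : ℝ) := by exact_mod_cast le_max_left n 1
        have hj0 : (0 : ℝ) ≤ (j : ℝ) := Nat.cast_nonneg j
        have hleN : n + j ≤ (max n 1) * (j + 1) := by
          rcases Nat.lt_or_ge n 1 with h' | h'
          · interval_cases n
            simp
          · rw [max_eq_left h', Nat.mul_add, Nat.mul_one]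
            have : j ≤ n * j := Nat.le_mul_of_pos_left j h'
            omega
        have hle : ((n + j : ℕ) : ℝ) ≤ ((max n 1 : ℕ) : ℝ) * ((j : ℝ) + 1) := by
          have h2 := Nat.cast_le (α := ℝ) |>.mpr hleN
          push_cast at h2 ⊢
          linarith
        have hdiv : ‖f (n + j)‖ ≤ M * ((n + j : ℕ) : ℝ) ^ ν := by
          have := hf (n + j) h
          rwa [div_le_iff₀ (by positivity)] at this
        calc ‖f (n + j)‖ ≤ M * ((n + j : ℕ) : ℝ) ^ ν := hdiv
          _ ≤ M * (((max n 1 : ℕ) : ℝ) * ((j : ℝ) + 1)) ^ ν := by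
              have := pow_le_pow_left₀ (Nat.cast_nonneg _) hle ν
              exact mul_le_mul_of_nonneg_left this hM
          _ = (M * ((max n 1 : ℕ) : ℝ) ^ ν) * ((j : ℝ) + 1) ^ ν := by
              rw [mul_pow]; ring
          _ ≤ C * ((j : ℝ) + 1) ^ ν := by gcongr; exact le_max_right _ _
    refine Summable.of_nonneg_of_le (fun j => norm_nonneg _) (fun j => ?_) (hT.mul_left C)
    rw [hnorm]
    calc r ^ (j + 1) * ‖f (n + j)‖
        ≤ r ^ (j + 1) * (C * ((j : ℝ) + 1) ^ ν) :=
          mul_le_mul_of_nonneg_left (hbound j) (pow_nonneg hr0 _)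
      _ = C * (r ^ (j + 1) * ((j : ℝ) + 1) ^ ν) := by ring
  have hS : ∀ n : ℕ, Summable (fun j : ℕ => (lam⁻¹) ^ (j + 1) • f (n + j)) :=
    fun n => (hsum n).of_norm
  refine ⟨hsum, ?_, ?_⟩
  · -- recurrence
    intro n _
    have h1 : lam • (∑' j : ℕ, (lam⁻¹) ^ (j + 1) • f (n + j)) =
        ∑' j : ℕ, (lam⁻¹) ^ j • f (n + j) := by
      rw [← Summable.tsum_const_smul lam (hS n)]
      refine tsum_congr fun j => ?_
      rw [smul_smul]
      congr 1
      rw [pow_succ', ← mul_assoc, mul_inv_cancel₀ hlam0, one_mul]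
    have hS' : Summable (fun j : ℕ => (lam⁻¹) ^ j • f (n + j)) := by
      refine ((hS n).const_smul lam).congr fun j => ?_
      rw [smul_smul]
      congr 1
      rw [pow_succ', ← mul_assoc, mul_inv_cancel₀ hlam0, one_mul]
    have h2 : ∑' j : ℕ, (lam⁻¹) ^ j • f (n + j) =
        f n + ∑' j : ℕ, (lam⁻¹) ^ (j + 1) • f ((n + 1) + j) := by
      rw [Summable.tsum_eq_zero_add hS']
      simp only [pow_zero, one_smul, Nat.add_zero]
      congr 1
      refine tsum_congr fun j => ?_
      congr 2
      omega
    rw [smul_neg, h1, h2]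
    abel
  · -- norm bound
    intro n hn
    have hn' : (0 : ℝ) < (n : ℝ) := by exact_mod_cast hn
    rw [div_le_iff₀ (by positivity)]
    have hbound : ∀ j : ℕ, ‖(lam⁻¹) ^ (j + 1) • f (n + j)‖ ≤
        (r ^ (j + 1) * ((j : ℝ) + 1) ^ ν) * (M * (n : ℝ) ^ ν) := by
      intro j
      rw [hnorm]
      have hpos : (0 : ℝ) < ((n + j : ℕ) : ℝ) := by positivity
      have hdiv : ‖f (n + j)‖ ≤ M * ((n + j : ℕ) : ℝ) ^ ν := by
        have := hf (n + j) (by omega)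
        rwa [div_le_iff₀ (by positivity)] at this
      have hle : ((n + j : ℕ) : ℝ) ≤ (n : ℝ) * ((j : ℝ) + 1) := by
        have hn1 : (1 : ℝ) ≤ (n : ℝ) := by exact_mod_cast hn
        have hj0 : (0 : ℝ) ≤ (j : ℝ) := Nat.cast_nonneg j
        push_cast
        nlinarith [mul_le_mul_of_nonneg_right hn1 hj0]
      calc r ^ (j + 1) * ‖f (n + j)‖
          ≤ r ^ (j + 1) * (M * ((n + j : ℕ) : ℝ) ^ ν) :=
            mul_le_mul_of_nonneg_left hdiv (pow_nonneg hr0 _)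
        _ ≤ r ^ (j + 1) * (M * ((n : ℝ) * ((j : ℝ) + 1)) ^ ν) := by
            have := pow_le_pow_left₀ (Nat.cast_nonneg (n + j)) hle ν
            exact mul_le_mul_of_nonneg_left (mul_le_mul_of_nonneg_left this hM) (pow_nonneg hr0 _)
        _ = (r ^ (j + 1) * ((j : ℝ) + 1) ^ ν) * (M * (n : ℝ) ^ ν) := by
            rw [mul_pow]; ring
    calc ‖-∑' j : ℕ, (lam⁻¹) ^ (j + 1) • f (n + j)‖
        = ‖∑' j : ℕ, (lam⁻¹) ^ (j + 1) • f (n + j)‖ := norm_neg _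
      _ ≤ ∑' j : ℕ, ‖(lam⁻¹) ^ (j + 1) • f (n + j)‖ := norm_tsum_le_tsum_norm (hsum n)
      _ ≤ ∑' j : ℕ, (r ^ (j + 1) * ((j : ℝ) + 1) ^ ν) * (M * (n : ℝ) ^ ν) :=
          Summable.tsum_le_tsum hbound (hsum n) (hT.mul_right _)
      _ = (∑' j : ℕ, r ^ (j + 1) * ((j : ℝ) + 1) ^ ν) * (M * (n : ℝ) ^ ν) := tsum_mul_right
      _ = (∑' j : ℕ, r ^ (j + 1) * ((j : ℝ) + 1) ^ ν) * M * (n : ℝ) ^ ν := by ring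
end

section
/- Let X be a complex Banach space, λ ∈ ℂ with |λ| > 1, ν a nonnegative integer, and h a sequence with lim_{n→∞} ‖h(n)‖/n^ν = 0. Then the sequence x_h(n) = -∑_{k=n}^∞ λ^{n-k-1} h(k) also satisfies lim_{n→∞} ‖x_h(n)‖/n^ν = 0. -/
open Filter Topology

/-- For `|λ| > 1` and a sequence `h` with `‖h n‖ / n^ν → 0`, the sequence
`x_h(n) = -∑_{k=n}^∞ λ^{n-k-1} h(k) = -∑_{j=0}^∞ λ^{-(j+1)} h(n+j)` also
satisfies `‖x_h n‖ / n^ν → 0`. -/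
theorem stmt_6 (X : Type*) [NormedAddCommGroup X] [NormedSpace ℂ X]
    [CompleteSpace X] (ν : ℕ) (lam : ℂ) (hlam : 1 < ‖lam‖)
    (h : ℕ → X) (hh : Tendsto (fun n : ℕ => ‖h n‖ / (n : ℝ) ^ ν) atTop (𝓝 0)) :
    Tendsto
      (fun n : ℕ => ‖-∑' j : ℕ, (lam⁻¹) ^ (j + 1) • h (n + j)‖ / (n : ℝ) ^ ν)
      atTop (𝓝 0) := by
  have habs : (0:ℝ) < ‖lam‖ := lt_trans one_pos hlam
  set r : ℝ := (‖lam‖)⁻¹ with hrdef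
  have hr0 : 0 < r := inv_pos.mpr habs
  have hr1 : r < 1 := by
    rw [hrdef]
    exact inv_lt_one_of_one_lt₀ hlam
  have hnormr : ‖r‖ < 1 := by rwa [Real.norm_eq_abs, abs_of_pos hr0]
  have S0 : Summable (fun j : ℕ => ((j:ℝ))^ν * r^j) :=
    summable_pow_mul_geometric_of_norm_lt_one ν hnormr
  have S : Summable (fun j : ℕ => ((j:ℝ)+1)^ν * r^(j+1)) := by
    have := S0.comp_injective (add_left_injective 1)
    simp only [Function.comp_def] at this
    push_cast at this
    exact this
  set C : ℝ := ∑' j : ℕ, ((j:ℝ)+1)^ν * r^(j+1) with hCdef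
  have hC0 : 0 ≤ C :=
    tsum_nonneg fun j => mul_nonneg (by positivity) (by positivity)
  rw [Metric.tendsto_atTop] at hh ⊢
  intro ε hε
  have hC1 : (0:ℝ) < C + 1 := by linarith
  set δ : ℝ := ε / (C+1) with hδdef
  have hδ : 0 < δ := div_pos hε hC1
  obtain ⟨N, hN⟩ := hh δ hδ
  refine ⟨max N 1, fun n hn => ?_⟩
  have hn1 : 1 ≤ n := le_trans (le_max_right N 1) hn
  have hnN : N ≤ n := le_trans (le_max_left N 1) hn
  have hnR : (1:ℝ) ≤ (n:ℝ) := by exact_mod_cast hn1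
  have hnpos : (0:ℝ) < (n:ℝ)^ν := by positivity
  -- bound on h
  have hb : ∀ j : ℕ, ‖h (n+j)‖ ≤ δ * ((n+j:ℕ):ℝ)^ν := by
    intro j
    have hm := hN (n+j) (le_trans hnN (Nat.le_add_right _ _))
    rw [Real.dist_eq, sub_zero] at hm
    have hmjR : (1:ℝ) ≤ ((n+j:ℕ):ℝ) := by
      have : 1 ≤ n + j := le_trans hn1 (Nat.le_add_right _ _)
      exact_mod_cast this
    have hmp : (0:ℝ) < ((n+j:ℕ):ℝ)^ν := by positivity
    have habs' : |‖h (n+j)‖ / ((n+j:ℕ):ℝ)^ν| = ‖h (n+j)‖ / ((n+j:ℕ):ℝ)^ν :=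
      abs_of_nonneg (div_nonneg (norm_nonneg _) hmp.le)
    rw [habs'] at hm
    have := (div_lt_iff₀ hmp).mp hm
    linarith
  have hpow : ∀ j : ℕ, ((n+j:ℕ):ℝ)^ν ≤ (n:ℝ)^ν * ((j:ℝ)+1)^ν := by
    intro j
    have h1 : ((n+j:ℕ):ℝ) ≤ (n:ℝ) * ((j:ℝ)+1) := by
      push_cast
      nlinarith [Nat.cast_nonneg (α := ℝ) j]
    calc ((n+j:ℕ):ℝ)^ν ≤ ((n:ℝ) * ((j:ℝ)+1))^ν :=
          pow_le_pow_left₀ (Nat.cast_nonneg _) h1 ν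
      _ = (n:ℝ)^ν * ((j:ℝ)+1)^ν := mul_pow _ _ _
  have hnormF : ∀ j : ℕ, ‖(lam⁻¹) ^ (j + 1) • h (n + j)‖ = r^(j+1) * ‖h (n+j)‖ := by
    intro j
    rw [norm_smul, norm_pow]
    congr 2
    rw [hrdef]
    simp [map_inv₀]
  have Sbig : Summable (fun j : ℕ => δ * (n:ℝ)^ν * (((j:ℝ)+1)^ν * r^(j+1))) :=
    S.mul_left _
  have hterm : ∀ j : ℕ, r^(j+1) * ‖h (n+j)‖ ≤ δ * (n:ℝ)^ν * (((j:ℝ)+1)^ν * r^(j+1)) := by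
    intro j
    have h1 : r^(j+1) * ‖h (n+j)‖ ≤ r^(j+1) * (δ * ((n+j:ℕ):ℝ)^ν) :=
      mul_le_mul_of_nonneg_left (hb j) (by positivity)
    have h2 : ((n+j:ℕ):ℝ)^ν ≤ (n:ℝ)^ν * ((j:ℝ)+1)^ν := hpow j
    have h3 : r^(j+1) * (δ * ((n+j:ℕ):ℝ)^ν) ≤ r^(j+1) * (δ * ((n:ℝ)^ν * ((j:ℝ)+1)^ν)) := by
      have := mul_le_mul_of_nonneg_left h2 hδ.le
      exact mul_le_mul_of_nonneg_left this (by positivity)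
    calc r^(j+1) * ‖h (n+j)‖ ≤ r^(j+1) * (δ * ((n:ℝ)^ν * ((j:ℝ)+1)^ν)) := le_trans h1 h3
      _ = δ * (n:ℝ)^ν * (((j:ℝ)+1)^ν * r^(j+1)) := by ring
  have SB : Summable (fun j : ℕ => r^(j+1) * ‖h (n+j)‖) :=
    Summable.of_nonneg_of_le (fun j => by positivity) hterm Sbig
  have SFnorm : Summable (fun j : ℕ => ‖(lam⁻¹) ^ (j + 1) • h (n + j)‖) := by
    simpa only [hnormF] using SB
  have key : ‖∑' j : ℕ, (lam⁻¹) ^ (j + 1) • h (n + j)‖ ≤ δ * (n:ℝ)^ν * C := by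
    calc ‖∑' j : ℕ, (lam⁻¹) ^ (j + 1) • h (n + j)‖
        ≤ ∑' j : ℕ, ‖(lam⁻¹) ^ (j + 1) • h (n + j)‖ := norm_tsum_le_tsum_norm SFnorm
      _ = ∑' j : ℕ, r^(j+1) * ‖h (n+j)‖ := by simp only [hnormF]
      _ ≤ ∑' j : ℕ, δ * (n:ℝ)^ν * (((j:ℝ)+1)^ν * r^(j+1)) := Summable.tsum_le_tsum hterm SB Sbig
      _ = δ * (n:ℝ)^ν * C := by rw [tsum_mul_left, hCdef]
  rw [Real.dist_eq, sub_zero, abs_of_nonneg (div_nonneg (norm_nonneg _) hnpos.le),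
    norm_neg]
  have hfle : ‖∑' j : ℕ, (lam⁻¹) ^ (j + 1) • h (n + j)‖ / (n:ℝ)^ν ≤ δ * C := by
    rw [div_le_iff₀ hnpos]
    calc ‖∑' j : ℕ, (lam⁻¹) ^ (j + 1) • h (n + j)‖ ≤ δ * (n:ℝ)^ν * C := key
      _ = δ * C * (n:ℝ)^ν := by ring
  have hlt : δ * C < ε := by
    have : δ * C < δ * (C + 1) := by nlinarith
    have heq : δ * (C + 1) = ε := div_mul_cancel₀ ε (ne_of_gt hC1)
    linarith
  exact lt_of_le_of_lt hfle hlt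
end

section
/- Let T be a bounded linear operator on a complex Banach space X, α > 0, and define S_α(n) = ∑_{j=0}^n (Γ(n - j + (j+1)α)/(Γ(n - j + 1) Γ(jα + α))) T^j for n ≥ 0. Then S_α(0) = I and S_α satisfies the resolvent recursion S_α(n+1) = k^α(n+1) I + T ∑_{j=0}^n k^α(n - j) S_α(j) for all n ≥ 0, where k^α(j) = Γ(α + j)/(Γ(α) Γ(j + 1)). -/
/-- The fractional difference kernel `k^α(j) = Γ(α+j)/(Γ(α)Γ(j+1))`. -/
noncomputable def fracKernel (α : ℝ) (j : ℕ) : ℝ :=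
  Real.Gamma (α + j) / (Real.Gamma α * Real.Gamma (j + 1))

/-- The explicit `α`-resolvent sequence
`S_α(n) = ∑_{j=0}^n Γ(n-j+(j+1)α)/(Γ(n-j+1)Γ(jα+α)) T^j`. -/
noncomputable def resolventSeq {X : Type*} [NormedAddCommGroup X] [NormedSpace ℂ X]
    (T : X →L[ℂ] X) (α : ℝ) (n : ℕ) : X →L[ℂ] X :=
  ∑ j ∈ Finset.range (n + 1),
    (Real.Gamma ((n : ℝ) - j + (j + 1) * α) /
      (Real.Gamma ((n : ℝ) - j + 1) * Real.Gamma (j * α + α))) • T ^ j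

lemma fk_zero {γ : ℝ} (hγ : 0 < γ) : fracKernel γ 0 = 1 := by
  simp only [fracKernel, Nat.cast_zero, add_zero, zero_add, Real.Gamma_one, mul_one]
  exact div_self (Real.Gamma_pos_of_pos hγ).ne'

lemma fk_rec {γ : ℝ} (hγ : 0 < γ) (j : ℕ) :
    ((j:ℝ)+1) * fracKernel γ (j+1) = (γ + j) * fracKernel γ j := by
  have h0 : (0:ℝ) < γ + j := by positivity
  have h1 : (0:ℝ) < (j:ℝ) + 1 := by positivity
  have e1 : (γ + ((j+1:ℕ):ℝ)) = (γ + j) + 1 := by push_cast; ring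
  have e2 : (((j+1:ℕ):ℝ) + 1) = ((j:ℝ) + 1) + 1 := by push_cast; ring
  unfold fracKernel
  rw [e1, e2, Real.Gamma_add_one h0.ne', Real.Gamma_add_one h1.ne']
  have hΓγ := (Real.Gamma_pos_of_pos hγ).ne'
  have hΓj := (Real.Gamma_pos_of_pos h1).ne'
  have hΓgj := (Real.Gamma_pos_of_pos h0).ne'
  field_simp

lemma fk_conv (α β : ℝ) (hα : 0 < α) (hβ : 0 < β) (N : ℕ) :
    ∑ m ∈ Finset.range (N+1), fracKernel α (N - m) * fracKernel β m
      = fracKernel (α + β) N := by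
  induction N with
  | zero => simp [fk_zero hα, fk_zero hβ, fk_zero (by positivity : (0:ℝ) < α+β)]
  | succ N ih =>
    have hab : (0:ℝ) < α + β := by positivity
    have hNe : ((N:ℝ)+1) ≠ 0 := by positivity
    apply mul_left_cancel₀ hNe
    rw [fk_rec hab N]
    calc ((N:ℝ)+1) * ∑ m ∈ Finset.range (N+1+1), fracKernel α (N+1-m) * fracKernel β m
        = ∑ m ∈ Finset.range (N+1+1),
            (((N+1-m : ℕ):ℝ) * (fracKernel α (N+1-m) * fracKernel β m)
              + (m:ℝ) * (fracKernel α (N+1-m) * fracKernel β m)) := by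
          rw [Finset.mul_sum]
          apply Finset.sum_congr rfl
          intro m hm
          have hm' : m ≤ N + 1 := by simpa [Nat.lt_succ_iff] using hm
          have : ((N+1-m : ℕ):ℝ) + (m:ℝ) = (N:ℝ)+1 := by
            push_cast [Nat.cast_sub hm']; ring
          rw [← this]; ring
      _ = (∑ m ∈ Finset.range (N+1),
            (α + ((N-m : ℕ):ℝ)) * (fracKernel α (N-m) * fracKernel β m))
          + ∑ m ∈ Finset.range (N+1),
            (β + (m:ℝ)) * (fracKernel α (N-m) * fracKernel β m) := by
          rw [Finset.sum_add_distrib]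
          congr 1
          · rw [Finset.sum_range_succ]
            simp only [Nat.sub_self, Nat.cast_zero, zero_mul, add_zero]
            apply Finset.sum_congr rfl
            intro m hm
            have hm' : m ≤ N := by simpa [Nat.lt_succ_iff] using hm
            have hsub : N + 1 - m = (N - m) + 1 := by omega
            rw [hsub]
            push_cast
            rw [show (((N - m : ℕ):ℝ) + 1) * (fracKernel α (N-m+1) * fracKernel β m)
                = (((N-m:ℕ):ℝ)+1) * fracKernel α ((N-m)+1) * fracKernel β m from by ring,
              fk_rec hα (N-m)]
            ring
          · rw [Finset.sum_range_succ']
            simp only [Nat.cast_zero, zero_mul, add_zero]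
            apply Finset.sum_congr rfl
            intro m hm
            have hsub : N + 1 - (m + 1) = N - m := by omega
            rw [hsub]
            push_cast
            rw [show ((m:ℝ) + 1) * (fracKernel α (N-m) * fracKernel β (m+1))
                = fracKernel α (N-m) * (((m:ℝ)+1) * fracKernel β (m+1)) from by ring,
              fk_rec hβ m]
            ring
      _ = (α + β + N) * ∑ m ∈ Finset.range (N+1), fracKernel α (N-m) * fracKernel β m := by
          rw [Finset.mul_sum, ← Finset.sum_add_distrib]
          apply Finset.sum_congr rfl
          intro m hm
          have hm' : m ≤ N := by simpa [Nat.lt_succ_iff] using hm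
          have : ((N-m : ℕ):ℝ) = (N:ℝ) - m := by
            push_cast [Nat.cast_sub hm']; ring
          rw [this]; ring
      _ = (α + β + N) * fracKernel (α+β) N := by rw [ih]

lemma coeff_eq (α : ℝ) {i j : ℕ} (hij : i ≤ j) :
    Real.Gamma ((j:ℝ) - i + ((i:ℝ) + 1) * α) /
      (Real.Gamma ((j:ℝ) - i + 1) * Real.Gamma ((i:ℝ) * α + α))
      = fracKernel (((i:ℝ)+1)*α) (j - i) := by
  have e1 : (j:ℝ) - i + ((i:ℝ)+1)*α = ((i:ℝ)+1)*α + ((j-i:ℕ):ℝ) := by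
    push_cast [Nat.cast_sub hij]; ring
  have e2 : (i:ℝ)*α + α = ((i:ℝ)+1)*α := by ring
  have e3 : (j:ℝ) - i + 1 = ((j-i:ℕ):ℝ) + 1 := by push_cast [Nat.cast_sub hij]; ring
  rw [e1, e2, e3, fracKernel, mul_comm (Real.Gamma (((j-i:ℕ):ℝ)+1))]


/-- `S_α(0) = I` and `S_α` satisfies the resolvent recursion
`S_α(n+1) = k^α(n+1) I + T ∑_{j=0}^n k^α(n-j) S_α(j)`. -/
theorem stmt_13 (X : Type*) [NormedAddCommGroup X] [NormedSpace ℂ X] [CompleteSpace X]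
    (T : X →L[ℂ] X) (α : ℝ) (hα : 0 < α) :
    resolventSeq T α 0 = 1 ∧
    ∀ n : ℕ, resolventSeq T α (n + 1) =
      fracKernel α (n + 1) • (1 : X →L[ℂ] X) +
        T * ∑ j ∈ Finset.range (n + 1), fracKernel α (n - j) • resolventSeq T α j := by
  have hΓα := (Real.Gamma_pos_of_pos hα).ne'
  constructor
  · simp [resolventSeq, Real.Gamma_one, div_self hΓα]
  · intro n
    have key : T * ∑ j ∈ Finset.range (n + 1), fracKernel α (n - j) • resolventSeq T α j
        = ∑ i ∈ Finset.range (n+1),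
            (∑ j ∈ Finset.Icc i n, fracKernel α (n-j) * fracKernel (((i:ℝ)+1)*α) (j-i))
              • T^(i+1) := by
      rw [Finset.mul_sum]
      have step1 : ∀ j ∈ Finset.range (n+1),
          T * (fracKernel α (n - j) • resolventSeq T α j)
          = ∑ i ∈ Finset.range (j+1),
              (fracKernel α (n-j) * fracKernel (((i:ℝ)+1)*α) (j-i)) • T^(i+1) := by
        intro j hj
        rw [mul_smul_comm]
        unfold resolventSeq
        rw [Finset.mul_sum, Finset.smul_sum]
        apply Finset.sum_congr rfl
        intro i hi
        have hij : i ≤ j := by simpa [Nat.lt_succ_iff] using hi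
        rw [mul_smul_comm, smul_smul, ← pow_succ', coeff_eq α hij]
      rw [Finset.sum_congr rfl step1]
      rw [Finset.sum_comm' (show ∀ j i, (j ∈ Finset.range (n+1) ∧ i ∈ Finset.range (j+1))
          ↔ (j ∈ Finset.Icc i n ∧ i ∈ Finset.range (n+1)) from by
            intro j i
            simp only [Finset.mem_range, Finset.mem_Icc, Nat.lt_succ_iff]
            omega)]
      apply Finset.sum_congr rfl
      intro i hi
      rw [← Finset.sum_smul]
    rw [key]
    have inner_eq : ∀ i ∈ Finset.range (n+1),
        (∑ j ∈ Finset.Icc i n, fracKernel α (n-j) * fracKernel (((i:ℝ)+1)*α) (j-i))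
          = fracKernel (α + ((i:ℝ)+1)*α) (n-i) := by
      intro i hi
      have hiN : i ≤ n := by simpa [Nat.lt_succ_iff] using hi
      rw [← Finset.Ico_add_one_right_eq_Icc, Finset.sum_Ico_eq_sum_range]
      have h1 : n + 1 - i = (n - i) + 1 := by omega
      rw [h1, ← fk_conv α (((i:ℝ)+1)*α) hα (by positivity) (n-i)]
      apply Finset.sum_congr rfl
      intro m hm
      congr 2
      · omega
      · omega
    rw [resolventSeq, Finset.sum_range_succ', add_comm]
    congr 1
    · -- j = 0 term equals fracKernel α (n+1) • 1
      have e0 : ((n+1:ℕ):ℝ) - (0:ℕ) + ((0:ℕ)+1)*α = α + ((n+1:ℕ):ℝ) := by push_cast; ring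
      have e1 : ((n+1:ℕ):ℝ) - (0:ℕ) + 1 = (((n+1:ℕ)+1:ℕ):ℝ) := by push_cast; ring
      have e2 : ((0:ℕ):ℝ)*α + α = α := by push_cast; ring
      simp only [Nat.cast_zero, Nat.cast_add, Nat.cast_one, pow_zero]
      rw [show ((n:ℝ)+1) - 0 + (0+1)*α = α + ((n+1:ℕ):ℝ) from by push_cast; ring,
        show ((n:ℝ)+1) - 0 + 1 = (((n+1:ℕ):ℕ):ℝ) + 1 from by push_cast; ring]
      rw [fracKernel, mul_comm (Real.Gamma α)]
      norm_num
    · apply Finset.sum_congr rfl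
      intro i hi
      have hiN : i ≤ n := by simpa [Nat.lt_succ_iff] using hi
      rw [inner_eq i hi]
      congr 1
      rw [show fracKernel (α + ((i:ℝ)+1)*α) (n-i)
            = fracKernel ((((i+1:ℕ):ℝ)+1)*α) ((n+1)-(i+1)) from by
          rw [show (n+1)-(i+1) = n-i from by omega]; congr 1; push_cast; ring,
        ← coeff_eq α (show i+1 ≤ n+1 from by omega)]
end

section
/- Let X be a complex Banach space, λ ∈ ℂ with 0 < |λ| ≠ 1, and f : ℕ → X a sequence with sup_{n≥1} ‖f(n)‖/n^ν < ∞ for some nonnegative integer ν. Then there exists a sequence x with sup_{n≥1} ‖x(n)‖/n^ν < ∞ satisfying x(n+1) = λ x(n) + f(n) for all n ≥ 1; moreover, any two such solutions differ by a sequence h with sup ‖h(n)‖/n^ν < ∞ of the form h(n) = λ^{n-1} h(1), and if |λ| < 1 then h ∈ c_0^ν(X). -/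
open Filter Topology

private lemma geom_Ico_le {r : ℝ} (h0 : 0 ≤ r) (h1 : r < 1) (n : ℕ) :
    ∑ k ∈ Finset.Ico 1 n, r ^ (n - 1 - k) ≤ (1 - r)⁻¹ := by
  rw [Finset.sum_Ico_eq_sum_range]
  have e : ∀ k ∈ Finset.range (n - 1), r ^ (n - 1 - (1 + k)) = r ^ ((n - 1) - 1 - k) := by
    intro k hk; congr 1; omega
  rw [Finset.sum_congr rfl e, Finset.sum_range_reflect (fun j => r ^ j)]
  calc ∑ j ∈ Finset.range (n - 1), r ^ j
      ≤ ∑' j : ℕ, r ^ j :=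
        Summable.sum_le_tsum _ (fun i _ => pow_nonneg h0 i) (summable_geometric_of_lt_one h0 h1)
    _ = (1 - r)⁻¹ := tsum_geometric_of_lt_one h0 h1

private lemma exists_sol_lt (X : Type*) [NormedAddCommGroup X] [NormedSpace ℂ X]
    (ν : ℕ) (lam : ℂ) (hlt : ‖lam‖ < 1) (f : ℕ → X) (M : ℝ) (hM0 : 0 ≤ M)
    (hf : ∀ n : ℕ, 1 ≤ n → ‖f n‖ ≤ M * (n : ℝ) ^ ν) :
    ∃ x : ℕ → X, (∃ M' : ℝ, ∀ n : ℕ, 1 ≤ n → ‖x n‖ ≤ M' * (n : ℝ) ^ ν) ∧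
      ∀ n : ℕ, 1 ≤ n → x (n + 1) = lam • x n + f n := by
  set r := ‖lam‖ with hr
  have hr0 : 0 ≤ r := norm_nonneg lam
  refine ⟨fun n => ∑ k ∈ Finset.Ico 1 n, lam ^ (n - 1 - k) • f k, ⟨(1 - r)⁻¹ * M, ?_⟩, ?_⟩
  · intro n hn
    calc ‖∑ k ∈ Finset.Ico 1 n, lam ^ (n - 1 - k) • f k‖
        ≤ ∑ k ∈ Finset.Ico 1 n, ‖lam ^ (n - 1 - k) • f k‖ := norm_sum_le _ _
      _ ≤ ∑ k ∈ Finset.Ico 1 n, r ^ (n - 1 - k) * (M * (n : ℝ) ^ ν) := by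
          apply Finset.sum_le_sum
          intro k hk
          rw [norm_smul, norm_pow]
          apply mul_le_mul_of_nonneg_left _ (pow_nonneg hr0 _)
          obtain ⟨hk1, hk2⟩ := Finset.mem_Ico.mp hk
          calc ‖f k‖ ≤ M * (k : ℝ) ^ ν := hf k hk1
            _ ≤ M * (n : ℝ) ^ ν := by
                apply mul_le_mul_of_nonneg_left _ hM0
                exact pow_le_pow_left₀ (by positivity) (by exact_mod_cast hk2.le) ν
      _ = (∑ k ∈ Finset.Ico 1 n, r ^ (n - 1 - k)) * (M * (n : ℝ) ^ ν) := by
          rw [Finset.sum_mul]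
      _ ≤ (1 - r)⁻¹ * (M * (n : ℝ) ^ ν) := by
          apply mul_le_mul_of_nonneg_right (geom_Ico_le hr0 hlt n) (by positivity)
      _ = (1 - r)⁻¹ * M * (n : ℝ) ^ ν := by ring
  · intro n hn
    show ∑ k ∈ Finset.Ico 1 (n + 1), lam ^ (n + 1 - 1 - k) • f k = _
    rw [Finset.sum_Ico_succ_top hn]
    have e2 : ∀ k ∈ Finset.Ico 1 n, lam ^ (n + 1 - 1 - k) • f k
        = lam • (lam ^ (n - 1 - k) • f k) := by
      intro k hk
      obtain ⟨hk1, hk2⟩ := Finset.mem_Ico.mp hk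
      rw [smul_smul, ← pow_succ']
      congr 2
      omega
    rw [Finset.sum_congr rfl e2, ← Finset.smul_sum]
    simp

private lemma exists_sol_gt (X : Type*) [NormedAddCommGroup X] [NormedSpace ℂ X]
    [CompleteSpace X] (ν : ℕ) (lam : ℂ) (hgt : 1 < ‖lam‖) (f : ℕ → X) (M : ℝ)
    (hM0 : 0 ≤ M) (hf : ∀ n : ℕ, 1 ≤ n → ‖f n‖ ≤ M * (n : ℝ) ^ ν) :
    ∃ x : ℕ → X, (∃ M' : ℝ, ∀ n : ℕ, 1 ≤ n → ‖x n‖ ≤ M' * (n : ℝ) ^ ν) ∧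
      ∀ n : ℕ, 1 ≤ n → x (n + 1) = lam • x n + f n := by
  have hne : lam ≠ 0 := by
    intro h; rw [h] at hgt; simp at hgt; linarith
  set r := ‖lam‖⁻¹ with hrdef
  have hr0 : 0 < r := by positivity
  have hr1 : r < 1 := inv_lt_one_of_one_lt₀ hgt
  have habsinv : ‖lam⁻¹‖ = r := by rw [norm_inv]
  set C := max M ‖f 0‖ with hCdef
  have hC0 : 0 ≤ C := le_trans (norm_nonneg (f 0)) (le_max_right _ _)
  have hC : ∀ m : ℕ, ‖f m‖ ≤ C * ((m : ℝ) + 1) ^ ν := by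
    intro m
    rcases Nat.eq_zero_or_pos m with hm | hm
    · subst hm
      simp only [Nat.cast_zero, zero_add, one_pow, mul_one]
      rw [hCdef]
      exact le_max_right _ _
    · calc ‖f m‖ ≤ M * (m : ℝ) ^ ν := hf m hm
        _ ≤ C * ((m : ℝ) + 1) ^ ν := by
            apply mul_le_mul (le_max_left _ _) _ (by positivity) hC0
            exact pow_le_pow_left₀ (by positivity) (by linarith) ν
  have hrnorm : ‖r‖ < 1 := by rwa [Real.norm_eq_abs, abs_of_nonneg hr0.le]
  have hg : Summable fun j : ℕ => (j : ℝ) ^ ν * r ^ j :=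
    summable_pow_mul_geometric_of_norm_lt_one ν hrnorm
  have hg1 : Summable fun j : ℕ => ((j : ℝ) + 1) ^ ν * r ^ (j + 1) :=
    ((summable_nat_add_iff 1).2 hg).congr fun j => by push_cast; ring
  have hg2 : Summable fun j : ℕ => ((j : ℝ) + 2) ^ ν * r ^ (j + 1) := by
    have h2 : Summable fun j : ℕ => ((j : ℝ) + 2) ^ ν * r ^ (j + 2) :=
      ((summable_nat_add_iff 2).2 hg).congr fun j => by push_cast; ring
    refine (h2.mul_left r⁻¹).congr fun j => ?_
    rw [pow_succ r (j+1)]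
    field_simp
  have hSnorm : ∀ n : ℕ, Summable fun j : ℕ => ‖(lam⁻¹) ^ (j + 1) • f (n + j)‖ := by
    intro n
    apply Summable.of_nonneg_of_le (fun j => norm_nonneg _) _
      (hg1.mul_left (C * ((n : ℝ) + 1) ^ ν))
    intro j
    rw [norm_smul, norm_pow, habsinv]
    calc r ^ (j + 1) * ‖f (n + j)‖
        ≤ r ^ (j + 1) * (C * (((n + j : ℕ) : ℝ) + 1) ^ ν) :=
          mul_le_mul_of_nonneg_left (hC (n + j)) (pow_nonneg hr0.le _)
      _ ≤ r ^ (j + 1) * (C * (((n : ℝ) + 1) * ((j : ℝ) + 1)) ^ ν) := by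
          apply mul_le_mul_of_nonneg_left
            (mul_le_mul_of_nonneg_left _ hC0) (pow_nonneg hr0.le _)
          apply pow_le_pow_left₀ (by positivity)
          have hj0 : (0 : ℝ) ≤ (j : ℝ) := Nat.cast_nonneg j
          have hn0 : (0 : ℝ) ≤ (n : ℝ) := Nat.cast_nonneg n
          push_cast
          nlinarith
      _ = C * ((n : ℝ) + 1) ^ ν * (((j : ℝ) + 1) ^ ν * r ^ (j + 1)) := by
          rw [mul_pow]; ring
  have hSn : ∀ n : ℕ, Summable fun j : ℕ => (lam⁻¹) ^ (j + 1) • f (n + j) :=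
    fun n => (hSnorm n).of_norm
  set x : ℕ → X := fun n => -∑' j : ℕ, (lam⁻¹) ^ (j + 1) • f (n + j) with hxdef
  have key : ∀ n : ℕ, x (n + 1) = lam • x n + f n := by
    intro n
    have e1 : ∀ j : ℕ, lam • ((lam⁻¹) ^ (j + 1) • f (n + j)) = (lam⁻¹) ^ j • f (n + j) := by
      intro j
      rw [smul_smul, pow_succ', ← mul_assoc, mul_inv_cancel₀ hne, one_mul]
    have hsum2 : Summable fun j : ℕ => (lam⁻¹) ^ j • f (n + j) :=
      ((hSn n).const_smul lam).congr e1
    have e2 : lam • x n = -∑' j : ℕ, (lam⁻¹) ^ j • f (n + j) := by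
      rw [show x n = -∑' j : ℕ, (lam⁻¹) ^ (j + 1) • f (n + j) from rfl, smul_neg,
        ← Summable.tsum_const_smul lam (hSn n)]
      congr 1
      exact tsum_congr e1
    have e3 : (∑' j : ℕ, (lam⁻¹) ^ (j + 1) • f (n + (j + 1)))
        = ∑' j : ℕ, (lam⁻¹) ^ (j + 1) • f ((n + 1) + j) :=
      tsum_congr fun j => by rw [show n + (j + 1) = (n + 1) + j from by omega]
    rw [e2, Summable.tsum_eq_zero_add hsum2, e3]
    simp only [pow_zero, one_smul, Nat.add_zero]
    show x (n + 1) = _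
    rw [show x (n + 1) = -∑' j : ℕ, (lam⁻¹) ^ (j + 1) • f ((n + 1) + j) from rfl]
    abel
  set S : ℝ := ∑' j : ℕ, ((j : ℝ) + 2) ^ ν * r ^ (j + 1) with hSdef
  refine ⟨x, ⟨C * S, ?_⟩, fun n _ => key n⟩
  intro n hn
  have hn1 : (1 : ℝ) ≤ (n : ℝ) := by exact_mod_cast hn
  calc ‖x n‖ = ‖∑' j : ℕ, (lam⁻¹) ^ (j + 1) • f (n + j)‖ := norm_neg _
    _ ≤ ∑' j : ℕ, ‖(lam⁻¹) ^ (j + 1) • f (n + j)‖ := norm_tsum_le_tsum_norm (hSnorm n)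
    _ ≤ ∑' j : ℕ, C * (n : ℝ) ^ ν * (((j : ℝ) + 2) ^ ν * r ^ (j + 1)) := by
        apply Summable.tsum_le_tsum _ (hSnorm n) (hg2.mul_left (C * (n : ℝ) ^ ν))
        intro j
        rw [norm_smul, norm_pow, habsinv]
        calc r ^ (j + 1) * ‖f (n + j)‖
            ≤ r ^ (j + 1) * (C * (((n + j : ℕ) : ℝ) + 1) ^ ν) :=
              mul_le_mul_of_nonneg_left (hC (n + j)) (pow_nonneg hr0.le _)
          _ ≤ r ^ (j + 1) * (C * ((n : ℝ) * ((j : ℝ) + 2)) ^ ν) := by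
              apply mul_le_mul_of_nonneg_left
                (mul_le_mul_of_nonneg_left _ hC0) (pow_nonneg hr0.le _)
              apply pow_le_pow_left₀ (by positivity)
              have hj0 : (0 : ℝ) ≤ (j : ℝ) := Nat.cast_nonneg j
              push_cast
              nlinarith
          _ = C * (n : ℝ) ^ ν * (((j : ℝ) + 2) ^ ν * r ^ (j + 1)) := by
              rw [mul_pow]; ring
    _ = C * (n : ℝ) ^ ν * S := tsum_mul_left
    _ = C * S * (n : ℝ) ^ ν := by ring

/-- For `0 < |λ| ≠ 1` and `f` with `sup_{n≥1} ‖f n‖/n^ν < ∞`, the difference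
equation `x(n+1) = λ x(n) + f(n)` (`n ≥ 1`) has a solution `x` with
`sup_{n≥1} ‖x n‖/n^ν < ∞`; moreover, the difference `h = x₁ - x₂` of any two
such solutions satisfies `h(n) = λ^{n-1} h(1)` for `n ≥ 1`, and if `|λ| < 1`
then `‖h n‖/n^ν → 0`. -/
theorem stmt_16 (X : Type*) [NormedAddCommGroup X] [NormedSpace ℂ X]
    [CompleteSpace X] (ν : ℕ) (lam : ℂ) (hlam0 : 0 < ‖lam‖)
    (hlam1 : ‖lam‖ ≠ 1) (f : ℕ → X)
    (hf : ∃ M : ℝ, ∀ n : ℕ, 1 ≤ n → ‖f n‖ ≤ M * (n : ℝ) ^ ν) :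
    (∃ x : ℕ → X, (∃ M : ℝ, ∀ n : ℕ, 1 ≤ n → ‖x n‖ ≤ M * (n : ℝ) ^ ν) ∧
      ∀ n : ℕ, 1 ≤ n → x (n + 1) = lam • x n + f n) ∧
    (∀ x₁ x₂ : ℕ → X,
      (∃ M : ℝ, ∀ n : ℕ, 1 ≤ n → ‖x₁ n‖ ≤ M * (n : ℝ) ^ ν) →
      (∃ M : ℝ, ∀ n : ℕ, 1 ≤ n → ‖x₂ n‖ ≤ M * (n : ℝ) ^ ν) →
      (∀ n : ℕ, 1 ≤ n → x₁ (n + 1) = lam • x₁ n + f n) →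
      (∀ n : ℕ, 1 ≤ n → x₂ (n + 1) = lam • x₂ n + f n) →
      (∀ n : ℕ, 1 ≤ n → x₁ n - x₂ n = lam ^ (n - 1) • (x₁ 1 - x₂ 1)) ∧
      (‖lam‖ < 1 →
        Tendsto (fun n : ℕ => ‖x₁ n - x₂ n‖ / (n : ℝ) ^ ν) atTop (𝓝 0))) := by
  obtain ⟨M, hM⟩ := hf
  have hM0 : 0 ≤ M := by
    have h1 := hM 1 le_rfl
    simp at h1
    exact le_trans (norm_nonneg _) h1
  constructor
  · rcases lt_or_gt_of_ne hlam1 with hlt | hgt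
    · exact exists_sol_lt X ν lam hlt f M hM0 hM
    · exact exists_sol_gt X ν lam hgt f M hM0 hM
  · intro x₁ x₂ _ _ hx1 hx2
    have hform : ∀ n : ℕ, 1 ≤ n → x₁ n - x₂ n = lam ^ (n - 1) • (x₁ 1 - x₂ 1) := by
      intro n hn
      induction n, hn using Nat.le_induction with
      | base => simp
      | succ n hn ih =>
        have hstep : x₁ (n + 1) - x₂ (n + 1) = lam • (x₁ n - x₂ n) := by
          rw [hx1 n hn, hx2 n hn, smul_sub]
          abel
        rw [hstep, ih, smul_smul, ← pow_succ']
        congr 2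
        omega
    refine ⟨hform, fun hlt => ?_⟩
    have habs0 : 0 ≤ ‖lam‖ := norm_nonneg lam
    have h1 : Tendsto (fun n : ℕ => ‖lam‖ ^ (n - 1) * ‖x₁ 1 - x₂ 1‖)
        atTop (𝓝 0) := by
      have h2 := (tendsto_pow_atTop_nhds_zero_of_lt_one habs0 hlt).comp
        (tendsto_sub_atTop_nat 1)
      simpa [Function.comp] using h2.mul_const ‖x₁ 1 - x₂ 1‖
    apply squeeze_zero' (Eventually.of_forall fun n => by positivity) _ h1
    filter_upwards [eventually_ge_atTop 1] with n hn
    rw [hform n hn, norm_smul, norm_pow]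
    apply div_le_self (by positivity)
    exact one_le_pow₀ (by exact_mod_cast hn)
end

section
/- Let ν be a nonnegative integer, r > 0, C > 0, and suppose (a_j)_{j∈ℤ} are elements of a complex Banach space such that for every integer n, ‖∑_{k=0}^{ν+1} binom(ν+1, k) r^{2ν-2k} a_{n-2k}‖ ≤ C 4^{ν+1} r^{ν-n-1} holds for all sufficiently small r > 0. Then a_j = 0 for all integers j ≤ -ν - 2. -/
/-- If the Laurent coefficients `(a_j)_{j ∈ ℤ}` satisfy, for every integer `n`
and all sufficiently small `r > 0`,
`‖∑_{k=0}^{ν+1} binom(ν+1,k) r^{2ν-2k} a_{n-2k}‖ ≤ C 4^{ν+1} r^{ν-n-1}`,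
then `a_j = 0` for all `j ≤ -ν-2`. -/
theorem stmt_19 (X : Type*) [NormedAddCommGroup X] [NormedSpace ℂ X]
    [CompleteSpace X] (ν : ℕ) (C : ℝ) (hC : 0 < C) (a : ℤ → X)
    (ha : ∀ n : ℤ, ∃ ε : ℝ, 0 < ε ∧ ∀ r : ℝ, 0 < r → r < ε →
      ‖∑ k ∈ Finset.range (ν + 2),
          ((ν + 1).choose k : ℝ) • (r ^ (2 * (ν : ℤ) - 2 * k) • a (n - 2 * k))‖ ≤
        C * 4 ^ (ν + 1) * r ^ ((ν : ℤ) - n - 1)) :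
    ∀ j : ℤ, j ≤ -(ν : ℤ) - 2 → a j = 0 := by
  intro j hj
  set n : ℤ := j + 2 * ν + 2 with hn
  obtain ⟨ε, hε, hbound⟩ := ha n
  set M : ℝ := C * 4 ^ (ν + 1) +
      ∑ k ∈ Finset.range (ν + 1), ((ν + 1).choose k : ℝ) * ‖a (n - 2 * k)‖ with hM
  have key : ∀ r : ℝ, 0 < r → r < min ε 1 → ‖a j‖ ≤ r * M := by
    intro r hr hrlt
    have hr1 : r ≤ 1 := le_of_lt (lt_of_lt_of_le hrlt (min_le_right _ _))
    have hrε : r < ε := lt_of_lt_of_le hrlt (min_le_left _ _)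
    have hrne : r ≠ 0 := ne_of_gt hr
    have hrpow : ∀ m : ℤ, 1 ≤ m → r ^ m ≤ r := by
      intro m hm
      calc r ^ m ≤ r ^ (1 : ℤ) := zpow_le_zpow_right_of_le_one₀ hr hr1 hm
        _ = r := zpow_one r
    have hsum := hbound r hr hrε
    have hterm : ∀ (c : ℝ) (m : ℤ) (x : X),
        (r ^ (2 : ℤ)) • (c • (r ^ m • x)) = c • (r ^ (m + 2) • x) := by
      intro c m x
      rw [smul_comm]
      congr 1
      rw [smul_smul, ← zpow_add₀ hrne, add_comm]
    have hdecomp :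
        (r : ℝ) ^ (2 : ℤ) • (∑ k ∈ Finset.range (ν + 2),
            ((ν + 1).choose k : ℝ) • (r ^ (2 * (ν : ℤ) - 2 * k) • a (n - 2 * k))) =
          (∑ k ∈ Finset.range (ν + 1),
            ((ν + 1).choose k : ℝ) • (r ^ (2 * (ν : ℤ) - 2 * k + 2) • a (n - 2 * k))) + a j := by
      rw [Finset.smul_sum, Finset.sum_range_succ]
      congr 1
      · exact Finset.sum_congr rfl fun k _ => hterm _ _ _
      · rw [hterm]
        have h1 : (ν + 1).choose (ν + 1) = 1 := Nat.choose_self _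
        have h2 : 2 * (ν : ℤ) - 2 * (((ν + 1 : ℕ) : ℤ)) + 2 = 0 := by push_cast; ring
        have h3 : n - 2 * (((ν + 1 : ℕ) : ℤ)) = j := by push_cast; omega
        rw [h1, h2, h3, zpow_zero, one_smul, Nat.cast_one, one_smul]
    have haj : a j = (r : ℝ) ^ (2 : ℤ) • (∑ k ∈ Finset.range (ν + 2),
            ((ν + 1).choose k : ℝ) • (r ^ (2 * (ν : ℤ) - 2 * k) • a (n - 2 * k)))
          - ∑ k ∈ Finset.range (ν + 1),
            ((ν + 1).choose k : ℝ) • (r ^ (2 * (ν : ℤ) - 2 * k + 2) • a (n - 2 * k)) := by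
      rw [hdecomp]; abel
    have hb1 : ‖(r : ℝ) ^ (2 : ℤ) • (∑ k ∈ Finset.range (ν + 2),
            ((ν + 1).choose k : ℝ) • (r ^ (2 * (ν : ℤ) - 2 * k) • a (n - 2 * k)))‖
          ≤ r * (C * 4 ^ (ν + 1)) := by
      rw [norm_smul, Real.norm_eq_abs, abs_of_pos (by positivity : (0:ℝ) < r ^ (2:ℤ))]
      have hA : (0:ℝ) < C * 4 ^ (ν + 1) := by positivity
      calc r ^ (2:ℤ) * ‖∑ k ∈ Finset.range (ν + 2),
            ((ν + 1).choose k : ℝ) • (r ^ (2 * (ν : ℤ) - 2 * k) • a (n - 2 * k))‖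
            ≤ r ^ (2:ℤ) * (C * 4 ^ (ν + 1) * r ^ ((ν : ℤ) - n - 1)) :=
          mul_le_mul_of_nonneg_left hsum (by positivity)
        _ = C * 4 ^ (ν + 1) * r ^ ((ν : ℤ) - n + 1) := by
          rw [show ((ν : ℤ) - n + 1) = 2 + ((ν : ℤ) - n - 1) by ring, zpow_add₀ hrne]
          ring
        _ ≤ C * 4 ^ (ν + 1) * r :=
          mul_le_mul_of_nonneg_left (hrpow _ (by omega)) hA.le
        _ = r * (C * 4 ^ (ν + 1)) := by ring
    have hb2 : ‖∑ k ∈ Finset.range (ν + 1),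
            ((ν + 1).choose k : ℝ) • (r ^ (2 * (ν : ℤ) - 2 * k + 2) • a (n - 2 * k))‖
          ≤ r * ∑ k ∈ Finset.range (ν + 1), ((ν + 1).choose k : ℝ) * ‖a (n - 2 * k)‖ := by
      calc ‖∑ k ∈ Finset.range (ν + 1),
            ((ν + 1).choose k : ℝ) • (r ^ (2 * (ν : ℤ) - 2 * k + 2) • a (n - 2 * k))‖
          ≤ ∑ k ∈ Finset.range (ν + 1),
            ‖((ν + 1).choose k : ℝ) • (r ^ (2 * (ν : ℤ) - 2 * k + 2) • a (n - 2 * k))‖ :=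
          norm_sum_le _ _
        _ ≤ ∑ k ∈ Finset.range (ν + 1),
            r * (((ν + 1).choose k : ℝ) * ‖a (n - 2 * k)‖) := by
          apply Finset.sum_le_sum
          intro k hk
          have hk' : k ≤ ν := Nat.lt_succ_iff.mp (Finset.mem_range.mp hk)
          rw [norm_smul, norm_smul, Real.norm_eq_abs, Real.norm_eq_abs,
            abs_of_nonneg (by positivity : (0:ℝ) ≤ ((ν + 1).choose k : ℝ)),
            abs_of_pos (by positivity : (0:ℝ) < r ^ (2 * (ν : ℤ) - 2 * k + 2))]
          have he : r ^ (2 * (ν : ℤ) - 2 * k + 2) ≤ r := hrpow _ (by omega)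
          have hc : (0:ℝ) ≤ ((ν + 1).choose k : ℝ) := by positivity
          calc ((ν + 1).choose k : ℝ) * (r ^ (2 * (ν : ℤ) - 2 * k + 2) * ‖a (n - 2 * k)‖)
              ≤ ((ν + 1).choose k : ℝ) * (r * ‖a (n - 2 * k)‖) := by
                exact mul_le_mul_of_nonneg_left
                  (mul_le_mul_of_nonneg_right he (norm_nonneg _)) hc
            _ = r * (((ν + 1).choose k : ℝ) * ‖a (n - 2 * k)‖) := by ring
        _ = r * ∑ k ∈ Finset.range (ν + 1), ((ν + 1).choose k : ℝ) * ‖a (n - 2 * k)‖ := by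
          rw [Finset.mul_sum]
    calc ‖a j‖ ≤ _ + _ := by rw [haj]; exact norm_sub_le _ _
      _ ≤ r * (C * 4 ^ (ν + 1)) +
          r * ∑ k ∈ Finset.range (ν + 1), ((ν + 1).choose k : ℝ) * ‖a (n - 2 * k)‖ :=
        add_le_add hb1 hb2
      _ = r * M := by rw [hM]; ring
  have hten : Filter.Tendsto (fun r : ℝ => r * M) (nhdsWithin 0 (Set.Ioi 0)) (nhds 0) := by
    have h : Filter.Tendsto (fun r : ℝ => r * M) (nhds 0) (nhds (0 * M)) :=
      (continuous_id.mul continuous_const).tendsto (0 : ℝ)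
    simpa using h.mono_left nhdsWithin_le_nhds
  have hev : ∀ᶠ r in nhdsWithin (0:ℝ) (Set.Ioi 0), ‖a j‖ ≤ r * M := by
    filter_upwards [Ioo_mem_nhdsGT_of_mem
      (Set.mem_Ico.mpr ⟨le_refl (0:ℝ), lt_min hε one_pos⟩)] with r hr
    exact key r hr.1 hr.2
  exact norm_le_zero_iff.mp (ge_of_tendsto hten hev)
end
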